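/- arXiv:1506.06166 — 2 statements merged into one kernel-verified Lean document; each statement's English description precedes it below -/
import Mathlib

section
/- Soundness of LP-Unif: if Φ ⊢ {A} ⇝*_γ ∅, i.e. the singleton query {A} reduces to the empty multiset by unification (LP-Unif) reductions with final accumulated substitution γ, then there exists a proof term e such that e : ∀x̄. ⇒ γA is derivable from the axioms Φ in the Horn-formulas-as-types system. -/
namespace SRes

/-- First-order terms: variables and function symbols applied to lists of terms. -/
inductive Tm : Type where
  | var : ℕ → Tm
  | fn : ℕ → List Tm → Tm

/-- First-order substitutions. -/
abbrev Subst := ℕ → Tm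

/-- Applying a substitution to a term. -/
def Tm.subst (σ : Subst) : Tm → Tm
  | .var x => σ x
  | .fn f ts => .fn f (ts.attach.map (fun t => Tm.subst σ t.1))
decreasing_by
  have := List.sizeOf_lt_of_mem t.2
  simp only [Tm.fn.sizeOf_spec]
  omega

/-- The identity substitution. -/
def Subst.id : Subst := Tm.var

/-- Composition of substitutions: `(Subst.comp θ γ) x = θ(γ(x))`. -/
def Subst.comp (θ γ : Subst) : Subst := fun x => (γ x).subst θ

/-- Free variables of a term. -/
def Tm.fv : Tm → Finset ℕ
  | .var x => {x}
  | .fn _ ts => (ts.attach.map (fun t => Tm.fv t.1)).foldr (· ∪ ·) ∅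
decreasing_by
  have := List.sizeOf_lt_of_mem t.2
  simp only [Tm.fn.sizeOf_spec]
  omega

/-- Function symbols occurring in a term. -/
def Tm.fns : Tm → Finset ℕ
  | .var _ => ∅
  | .fn f ts => insert f ((ts.attach.map (fun t => Tm.fns t.1)).foldr (· ∪ ·) ∅)
decreasing_by
  have := List.sizeOf_lt_of_mem t.2
  simp only [Tm.fn.sizeOf_spec]
  omega

/-- Atomic formulas `P(t1,...,tn)`. -/
structure Atom : Type where
  pred : ℕ
  args : List Tm

def Atom.subst (σ : Subst) (A : Atom) : Atom := ⟨A.pred, A.args.map (Tm.subst σ)⟩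

def Atom.fv (A : Atom) : Finset ℕ := (A.args.map Tm.fv).foldr (· ∪ ·) ∅

def Atom.fns (A : Atom) : Finset ℕ := (A.args.map Tm.fns).foldr (· ∪ ·) ∅

/-- Renaming the variables of an atom. -/
def Atom.rename (ρ : ℕ → ℕ) (A : Atom) : Atom := A.subst (fun x => .var (ρ x))

/-- `A.ext t'` is `A[t']`: add `t'` as an extra last argument of `A`. -/
def Atom.ext (A : Atom) (t : Tm) : Atom := ⟨A.pred, A.args ++ [t]⟩

def listFV (As : List Atom) : Finset ℕ := (As.map Atom.fv).foldr (· ∪ ·) ∅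

def listFns (As : List Atom) : Finset ℕ := (As.map Atom.fns).foldr (· ∪ ·) ∅

/-- Free variables of a multiset of atoms. -/
def mFV (G : Multiset Atom) : Finset ℕ := (G.map Atom.fv).sup

/-- A logic program: a finite list of axioms `κ : ∀x̄. body ⇒ head`
(each axiom is implicitly universally closed). -/
abbrev Prog := List (ℕ × List Atom × Atom)

def progFns (Φ : Prog) : Finset ℕ :=
  (Φ.map (fun r => r.2.2.fns ∪ listFns r.2.1)).foldr (· ∪ ·) ∅

/-! ### Proof terms (de Bruijn representation for bound proof variables) -/

inductive Pf : Type where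
  | const : ℕ → Pf           -- proof-term constants κ
  | bvar : ℕ → Pf            -- proof-term variables a (de Bruijn)
  | lam : Pf → Pf            -- λa.e
  | app : Pf → Pf → Pf       -- e e'

/-- Lift de Bruijn indices `≥ c` by `d`. -/
def Pf.lift (c d : ℕ) : Pf → Pf
  | .const k => .const k
  | .bvar i => if i < c then .bvar i else .bvar (i + d)
  | .lam p => .lam (p.lift (c+1) d)
  | .app p q => .app (p.lift c d) (q.lift c d)

/-- Substitute `q` for de Bruijn index `k` in a proof term. -/
def Pf.subst (k : ℕ) (q : Pf) : Pf → Pf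
  | .const c => .const c
  | .bvar i => if i < k then .bvar i else if i = k then q.lift 0 k else .bvar (i - 1)
  | .lam p => .lam (Pf.subst (k+1) q p)
  | .app p p' => .app (Pf.subst k q p) (Pf.subst k q p')

/-- Beta-reduction on proof terms: congruence closure of `(λa.p) p' →β [p'/a]p`. -/
inductive Beta : Pf → Pf → Prop where
  | beta (p q : Pf) : Beta (.app (.lam p) q) (p.subst 0 q)
  | appL {p p' q : Pf} : Beta p p' → Beta (.app p q) (.app p' q)
  | appR {p q q' : Pf} : Beta q q' → Beta (.app p q) (.app p q')
  | lam {p p' : Pf} : Beta p p' → Beta (.lam p) (.lam p')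

/-- A proof term is strongly normalizing if every β-reduction sequence from it is finite. -/
def Pf.SN (p : Pf) : Prop := Acc (fun a b => Beta b a) p

/-- β-normal proof terms. -/
def Pf.Normal (p : Pf) : Prop := ∀ q, ¬ Beta p q

/-- First-order proof terms: built from constants and variables by application only. -/
inductive Pf.FirstOrder : Pf → Prop where
  | const (κ : ℕ) : Pf.FirstOrder (.const κ)
  | bvar (a : ℕ) : Pf.FirstOrder (.bvar a)
  | app {p q : Pf} : Pf.FirstOrder p → Pf.FirstOrder q → Pf.FirstOrder (.app p q)

/-- `Pf.lams k p` is `λa1...λak. p`. -/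
def Pf.lams : ℕ → Pf → Pf
  | 0, p => p
  | n+1, p => .lam (Pf.lams n p)

/-- Apply a proof term to a list of proof terms, left associated. -/
def Pf.apps (p : Pf) : List Pf → Pf
  | [] => p
  | q :: qs => Pf.apps (.app p q) qs

/-- The proof term `λā.λb̄.(e2 b̄)(e1 ā)` produced by the cut rule
(`n` is the length of `ā`, `m` the length of `b̄`). -/
def cutTerm (n m : ℕ) (e₁ e₂ : Pf) : Pf :=
  Pf.lams (n + m) <|
    .app (Pf.apps (e₂.lift 0 (n+m)) ((List.range m).map (fun j => Pf.bvar (m - 1 - j))))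
         (Pf.apps (e₁.lift 0 (n+m)) ((List.range n).map (fun j => Pf.bvar (n + m - 1 - j))))

/-! ### Horn formulas as types -/

/-- Horn formulas `A1,...,An ⇒ B`, either unquantified (`horn`)
or universally closed over all their free term variables (`all`). -/
inductive Formula : Type where
  | horn : List Atom → Atom → Formula
  | all : List Atom → Atom → Formula

/-- The Horn-formulas-as-types typing judgment `e : F` relative to a program `Φ`. -/
inductive Derives (Φ : Prog) : Pf → Formula → Prop where
  | ax {κ : ℕ} {body : List Atom} {head : Atom} :
      (κ, body, head) ∈ Φ → Derives Φ (.const κ) (.all body head)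
  | gen {e : Pf} {body : List Atom} {head : Atom} :
      Derives Φ e (.horn body head) → Derives Φ e (.all body head)
  | inst {e : Pf} {body : List Atom} {head : Atom} (σ : Subst) :
      Derives Φ e (.all body head) →
      Derives Φ e (.horn (body.map (Atom.subst σ)) (head.subst σ))
  | cut {e₁ e₂ : Pf} {As Bs : List Atom} {D C : Atom} :
      Derives Φ e₁ (.horn As D) → Derives Φ e₂ (.horn (Bs ++ [D]) C) →
      Derives Φ (cutTerm As.length Bs.length e₁ e₂) (.horn (As ++ Bs) C)

/-! ### Reductions -/

def Unifies (γ : Subst) (A B : Atom) : Prop := A.subst γ = B.subst γ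

/-- `γ` is a most general unifier of `A` and `B`. -/
def IsMGU (γ : Subst) (A B : Atom) : Prop :=
  Unifies γ A B ∧ ∀ δ, Unifies δ A B → ∃ θ, δ = Subst.comp θ γ

/-- `(body, head)` is a freshly renamed copy of the axiom `κ` of `Φ`,
whose variables do not occur in the goal multiset `G`. -/
def FreshRuleFor (Φ : Prog) (κ : ℕ) (G : Multiset Atom)
    (body : List Atom) (head : Atom) : Prop :=
  ∃ (body₀ : List Atom) (head₀ : Atom) (ρ : ℕ → ℕ),
    (κ, body₀, head₀) ∈ Φ ∧ Function.Injective ρ ∧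
    body = body₀.map (Atom.rename ρ) ∧ head = head₀.rename ρ ∧
    Disjoint (listFV body ∪ head.fv) (mFV G)

/-- Term-matching (LP-TM) reduction step via axiom `κ`:
replace `Ai = σC` by `σB1,...,σBm`. -/
def TMStep (Φ : Prog) (κ : ℕ) (G G' : Multiset Atom) : Prop :=
  ∃ (body : List Atom) (head : Atom) (σ : Subst) (rest : Multiset Atom),
    (κ, body, head) ∈ Φ ∧ G = (head.subst σ) ::ₘ rest ∧
    G' = ↑(body.map (Atom.subst σ)) + rest

def TMred (Φ : Prog) (G G' : Multiset Atom) : Prop := ∃ κ, TMStep Φ κ G G'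

/-- `G` is in term-matching normal form. -/
def TMNF (Φ : Prog) (G : Multiset Atom) : Prop := ∀ G', ¬ TMred Φ G G'

/-- `Φ` is productive: every term-matching reduction sequence is finite. -/
def Productive (Φ : Prog) : Prop := ∀ G, Acc (fun a b => TMred Φ b a) G

/-- Unification (LP-Unif) reduction step via axiom `κ` with most general unifier `γ`. -/
def UnifStepL (Φ : Prog) (κ : ℕ) (γ : Subst) (G G' : Multiset Atom) : Prop :=
  ∃ (A : Atom) (rest : Multiset Atom) (body : List Atom) (head : Atom),
    G = A ::ₘ rest ∧ FreshRuleFor Φ κ G body head ∧ IsMGU γ head A ∧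
    G' = ↑(body.map (Atom.subst γ)) + rest.map (Atom.subst γ)

/-- Substitutional reduction step via axiom `κ` with most general unifier `γ`. -/
def SubStepL (Φ : Prog) (κ : ℕ) (γ : Subst) (G G' : Multiset Atom) : Prop :=
  ∃ (A : Atom) (rest : Multiset Atom) (body : List Atom) (head : Atom),
    G = A ::ₘ rest ∧ FreshRuleFor Φ κ G body head ∧ IsMGU γ head A ∧
    G' = G.map (Atom.subst γ)

/-- Stateful LP-Unif reduction on pairs (goal multiset, accumulated substitution). -/
def unifR (Φ : Prog) (p q : Multiset Atom × Subst) : Prop :=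
  ∃ κ γ, UnifStepL Φ κ γ p.1 q.1 ∧ q.2 = Subst.comp γ p.2

/-- Stateful LP-Struct reduction `→^μ·↪^1`: term-matching reduce to `→`-normal form,
then perform at most one substitutional step. -/
def structR (Φ : Prog) (p q : Multiset Atom × Subst) : Prop :=
  ∃ G', Relation.ReflTransGen (TMred Φ) p.1 G' ∧ TMNF Φ G' ∧
    ((q.1 = G' ∧ q.2 = p.2) ∨ ∃ κ γ, SubStepL Φ κ γ G' q.1 ∧ q.2 = Subst.comp γ p.2)

/-- A multiset of queries succeeds by LP-Unif reduction. -/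
def UnifSucc (Φ : Prog) (G : Multiset Atom) : Prop :=
  ∃ γ, Relation.ReflTransGen (unifR Φ) (G, Subst.id) (0, γ)

/-- A multiset of queries succeeds by LP-Struct reduction. -/
def StructSucc (Φ : Prog) (G : Multiset Atom) : Prop :=
  ∃ γ, Relation.ReflTransGen (structR Φ) (G, Subst.id) (0, γ)

/-- `Φ` is non-overlapping: heads of distinct axioms have no common instance. -/
def NonOverlapping (Φ : Prog) : Prop :=
  ∀ κ body head κ' body' head', (κ, body, head) ∈ Φ → (κ', body', head') ∈ Φ → κ ≠ κ' →
    ∀ σ δ : Subst, head.subst σ ≠ head'.subst δ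

/-! ### Realizability transformation -/

def ruleFV (body : List Atom) (head : Atom) : Finset ℕ := listFV body ∪ head.fv

/-- `extBody [A1,...,Am] [y1,...,ym] = [A1[y1],...,Am[ym]]`. -/
def extBody (As : List Atom) (ys : List ℕ) : List Atom :=
  List.zipWith (fun A y => A.ext (Tm.var y)) As ys

/-- Realizability transformation of a single axiom `κ : ∀x̄. A1,...,Am ⇒ B`
into `κ : ∀x̄∀ȳ. A1[y1],...,Am[ym] ⇒ B[f_κ(y1,...,ym)]` with fresh distinct `ȳ`. -/
def transRule (fsym : ℕ → ℕ) (κ : ℕ) (body : List Atom) (head : Atom) : List Atom × Atom :=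
  let N := (ruleFV body head).sup id + 1
  let ys := (List.range body.length).map (fun i => N + i)
  (extBody body ys, head.ext (.fn (fsym κ) (ys.map Tm.var)))

/-- The realizability transformation `F(Φ)`. -/
def transProg (fsym : ℕ → ℕ) (Φ : Prog) : Prog :=
  Φ.map (fun r => (r.1, transRule fsym r.1 r.2.1 r.2.2))

/-- `fsym` assigns a fresh function symbol `f_κ` to each proof-term constant `κ`. -/
def FreshSyms (fsym : ℕ → ℕ) (Φ : Prog) : Prop :=
  Function.Injective fsym ∧ ∀ κ, fsym κ ∉ progFns Φ

/-- The representation `⟦·⟧_φ` of first-order normal proof terms as first-order terms: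
`⟦a⟧_φ = φ(a)` and `⟦κ p1 ... pn⟧_φ = f_κ(⟦p1⟧_φ,...,⟦pn⟧_φ)`. -/
inductive PfRep (fsym : ℕ → ℕ) (φ : ℕ → Tm) : Pf → Tm → Prop where
  | bvar (a : ℕ) : PfRep fsym φ (.bvar a) (φ a)
  | app (κ : ℕ) (ps : List Pf) (ts : List Tm) (hlen : ps.length = ts.length)
      (h : ∀ pt ∈ ps.zip ts, PfRep fsym φ pt.1 pt.2) :
      PfRep fsym φ (Pf.apps (.const κ) ps) (.fn (fsym κ) ts)

/-- The map `[ȳ/ā]` sending the bound proof variables `a1,...,ak` (de Bruijn) of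
`λa1...ak.n` to the first-order variables `y1,...,yk`. -/
def mkPhi (ys : List ℕ) : ℕ → Tm := fun j => Tm.var (ys.getD (ys.length - 1 - j) 0)

/-! ### Auxiliary lemmas for soundness -/

theorem Tm.my_induct {P : Tm → Prop} (hv : ∀ x, P (.var x))
    (hf : ∀ f ts, (∀ t ∈ ts, P t) → P (.fn f ts)) : ∀ t, P t := by
  have key : ∀ n, ∀ t : Tm, sizeOf t < n → P t := by
    intro n
    induction n with
    | zero => intro t h; omega
    | succ n ih =>
      intro t h
      match t with
      | .var x => exact hv x
      | .fn f ts =>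
        apply hf
        intro u hu
        apply ih
        have := List.sizeOf_lt_of_mem hu
        simp only [Tm.fn.sizeOf_spec] at h
        omega
  exact fun t => key (sizeOf t + 1) t (by omega)

theorem Tm.subst_fn (σ : Subst) (f : ℕ) (ts : List Tm) :
    Tm.subst σ (.fn f ts) = .fn f (ts.map (Tm.subst σ)) := by
  rw [Tm.subst]
  congr 1
  rw [List.attach_map_val]

theorem Tm.subst_var (σ : Subst) (x : ℕ) : Tm.subst σ (.var x) = σ x := by
  rw [Tm.subst]

theorem Tm.subst_id : ∀ t : Tm, t.subst Subst.id = t := by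
  apply Tm.my_induct
  · intro x; rw [Tm.subst_var]; rfl
  · intro f ts ih
    rw [Tm.subst_fn]
    congr 1
    exact List.map_congr_left ih |>.trans (List.map_id _)

theorem Tm.subst_comp (θ γ : Subst) : ∀ t : Tm,
    (t.subst γ).subst θ = t.subst (Subst.comp θ γ) := by
  apply Tm.my_induct
  · intro x; rw [Tm.subst_var, Tm.subst_var]; rfl
  · intro f ts ih
    rw [Tm.subst_fn, Tm.subst_fn, Tm.subst_fn, List.map_map]
    congr 1
    exact List.map_congr_left ih

theorem Subst.comp_id_left (σ : Subst) : Subst.comp Subst.id σ = σ := by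
  funext x; exact Tm.subst_id (σ x)

theorem Subst.comp_id_right (σ : Subst) : Subst.comp σ Subst.id = σ := by
  funext x; exact Tm.subst_var σ x

theorem Subst.comp_assoc (θ γ σ : Subst) :
    Subst.comp θ (Subst.comp γ σ) = Subst.comp (Subst.comp θ γ) σ := by
  funext x
  show ((σ x).subst γ).subst θ = (σ x).subst (Subst.comp θ γ)
  exact Tm.subst_comp θ γ (σ x)

theorem Atom.subst_comp (θ γ : Subst) (A : Atom) :
    (A.subst γ).subst θ = A.subst (Subst.comp θ γ) := by
  unfold Atom.subst
  simp only [List.map_map]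
  congr 1
  exact List.map_congr_left (fun t _ => Tm.subst_comp θ γ t)

/-- Discharging a proved body via iterated cuts. -/
theorem discharge (Φ : Prog) (C : Atom) :
    ∀ Bs : List Atom, (∀ B ∈ Bs, ∃ e, Derives Φ e (.horn [] B)) →
    (∃ e, Derives Φ e (.horn Bs C)) → ∃ e, Derives Φ e (.horn [] C) := by
  intro Bs
  induction Bs using List.reverseRecOn with
  | nil => intro _ h; exact h
  | append_singleton Bs D ih =>
    rintro hall ⟨e₂, h₂⟩
    obtain ⟨e₁, h₁⟩ := hall D (by simp)
    apply ih (fun B hB => hall B (by simp [hB]))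
    exact ⟨_, by simpa using Derives.cut (As := []) h₁ h₂⟩

theorem lp_unif_key (Φ : Prog) (γ : Subst) :
    ∀ p : Multiset Atom × Subst, Relation.ReflTransGen (unifR Φ) p (0, γ) →
    ∃ θ, γ = Subst.comp θ p.2 ∧
      ∀ A ∈ p.1, ∃ e, Derives Φ e (.horn [] (A.subst θ)) := by
  intro p h
  induction h using Relation.ReflTransGen.head_induction_on with
  | refl =>
    refine ⟨Subst.id, (Subst.comp_id_left γ).symm, ?_⟩
    intro A hA; simp at hA
  | @head a b hstep htail ih =>
    obtain ⟨κ, γ₁, hu, hsub⟩ := hstep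
    obtain ⟨A, rest, body, head, hG, hfresh, hmgu, hG'⟩ := hu
    obtain ⟨θ', hθγ, hθ'⟩ := ih
    refine ⟨Subst.comp θ' γ₁, ?_, ?_⟩
    · rw [hθγ, hsub, Subst.comp_assoc]
    · intro B hB
      -- every element of body.map (subst γ₁) and rest.map (subst γ₁) is proved under θ'
      have hmem : ∀ D : Atom, D ∈ b.1 → ∃ e, Derives Φ e (.horn [] (D.subst θ')) :=
        fun D hD => hθ' D hD
      rw [hG] at hB
      rcases Multiset.mem_cons.mp hB with hBA | hBrest
      · -- B = A : use the axiom, its head unifies with A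
        subst hBA
        obtain ⟨body₀, head₀, ρ, hax, _, hbody, hhead, _⟩ := hfresh
        have hhd : head.subst γ₁ = B.subst γ₁ := hmgu.1
        have hBθ : B.subst (Subst.comp θ' γ₁)
            = head.subst (Subst.comp θ' γ₁) := by
          rw [← Atom.subst_comp, ← Atom.subst_comp, hhd]
        rw [hBθ]
        set θ : Subst := Subst.comp θ' γ₁ with hθdef
        set σ₂ : Subst := Subst.comp θ (fun x => .var (ρ x)) with hσ₂
        have hder := Derives.inst σ₂ (Derives.ax (Φ := Φ) hax)
        have hhead' : head₀.subst σ₂ = head.subst θ := by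
          rw [hhead]
          unfold Atom.rename
          rw [Atom.subst_comp]
        have hbody' : body₀.map (Atom.subst σ₂) = body.map (Atom.subst θ) := by
          rw [hbody, List.map_map]
          apply List.map_congr_left
          intro B₀ _
          show B₀.subst σ₂ = (Atom.rename ρ B₀).subst θ
          unfold Atom.rename
          rw [Atom.subst_comp]
        rw [hhead', hbody'] at hder
        apply discharge Φ _ (body.map (Atom.subst θ))
        · intro D hD
          obtain ⟨B₁, hB₁, rfl⟩ := List.mem_map.mp hD
          have : B₁.subst γ₁ ∈ b.1 := by
            rw [hG']
            apply Multiset.mem_add.mpr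
            left
            exact Multiset.mem_coe.mpr (List.mem_map.mpr ⟨B₁, hB₁, rfl⟩)
          obtain ⟨e, he⟩ := hmem _ this
          rw [Atom.subst_comp] at he
          exact ⟨e, he⟩
        · exact ⟨_, hder⟩
      · -- B ∈ rest
        have : B.subst γ₁ ∈ b.1 := by
          rw [hG']
          apply Multiset.mem_add.mpr
          right
          exact Multiset.mem_map_of_mem _ hBrest
        obtain ⟨e, he⟩ := hmem _ this
        rw [Atom.subst_comp] at he
        exact ⟨e, he⟩

/-- Soundness of LP-Unif: if `Φ ⊢ {A} ⇝*_γ ∅`, then there is a proof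
term `e` with `e : ∀x̄. ⇒ γA` derivable from `Φ`. -/
theorem lp_unif_sound (Φ : Prog) (A : Atom) (γ : Subst)
    (h : Relation.ReflTransGen (unifR Φ) ({A}, Subst.id) (0, γ)) :
    ∃ e : Pf, Derives Φ e (.all [] (A.subst γ)) := by
  obtain ⟨θ, hθ, hpf⟩ := lp_unif_key Φ γ ({A}, Subst.id) h
  rw [Subst.comp_id_right] at hθ
  subst hθ
  obtain ⟨e, he⟩ := hpf A (by simp)
  exact ⟨e, Derives.gen he⟩

end SRes
end

section
/- If e : [∀x̄.] ⇒ B is derivable from axioms Φ (a proof of a Horn formula with empty body), then e is β-normalizable to a first-order proof term, i.e. a proof term built from proof-term constants and variables by application only. -/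
namespace SRes

/-! ### Auxiliary lemmas for Statement 5 -/

theorem pfLift_lift (q : Pf) : ∀ c₁ c₂ k d, c₁ ≤ c₂ →
    (q.lift c₁ k).lift (c₂ + k) d = (q.lift c₂ d).lift c₁ k := by
  induction q with
  | const => intros; simp [Pf.lift]
  | bvar i =>
    intro c₁ c₂ k d h
    simp only [Pf.lift]
    split_ifs <;> simp only [Pf.lift] <;> split_ifs <;>
      simp only [Pf.bvar.injEq] <;> omega
  | lam p ih =>
    intro c₁ c₂ k d h
    simp only [Pf.lift, Pf.lam.injEq]
    rw [show c₂ + k + 1 = (c₂ + 1) + k from by omega]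
    exact ih _ _ _ _ (by omega)
  | app p q ihp ihq =>
    intro c₁ c₂ k d h
    simp only [Pf.lift, Pf.app.injEq]
    exact ⟨ihp _ _ _ _ h, ihq _ _ _ _ h⟩

theorem pfLift_zero (p : Pf) : ∀ c, p.lift c 0 = p := by
  induction p with
  | const => intro c; rfl
  | bvar i => intro c; simp [Pf.lift]
  | lam p ih => intro c; simp [Pf.lift, ih]
  | app p q ihp ihq => intro c; simp [Pf.lift, ihp, ihq]

theorem betaStar_appL {p p' : Pf} (q : Pf) (h : Relation.ReflTransGen Beta p p') :
    Relation.ReflTransGen Beta (.app p q) (.app p' q) :=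
  Relation.ReflTransGen.lift (fun x => Pf.app x q) (fun _ _ hb => Beta.appL hb) _ _ h

theorem betaStar_appR (p : Pf) {q q' : Pf} (h : Relation.ReflTransGen Beta q q') :
    Relation.ReflTransGen Beta (.app p q) (.app p q') :=
  Relation.ReflTransGen.lift (fun x => Pf.app p x) (fun _ _ hb => Beta.appR hb) _ _ h

theorem betaStar_app {p p' q q' : Pf} (hp : Relation.ReflTransGen Beta p p')
    (hq : Relation.ReflTransGen Beta q q') :
    Relation.ReflTransGen Beta (.app p q) (.app p' q') :=
  (betaStar_appL q hp).trans (betaStar_appR p' hq)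

theorem betaStar_lam {p p' : Pf} (h : Relation.ReflTransGen Beta p p') :
    Relation.ReflTransGen Beta (.lam p) (.lam p') :=
  Relation.ReflTransGen.lift Pf.lam (fun _ _ hb => Beta.lam hb) _ _ h

theorem betaStar_lams (k : ℕ) {p p' : Pf} (h : Relation.ReflTransGen Beta p p') :
    Relation.ReflTransGen Beta (Pf.lams k p) (Pf.lams k p') := by
  induction k with
  | zero => exact h
  | succ n ih => exact betaStar_lam ih

theorem betaStar_apps {p p' : Pf} (qs : List Pf) (h : Relation.ReflTransGen Beta p p') :
    Relation.ReflTransGen Beta (Pf.apps p qs) (Pf.apps p' qs) := by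
  induction qs generalizing p p' with
  | nil => exact h
  | cons q qs ih => exact ih (betaStar_appL q h)

theorem lams_lift (k : ℕ) : ∀ (c d : ℕ) (p : Pf),
    (Pf.lams k p).lift c d = Pf.lams k (p.lift (c + k) d) := by
  induction k with
  | zero => intros; rfl
  | succ n ih =>
    intro c d p
    simp only [Pf.lams, Pf.lift, Pf.lam.injEq]
    rw [ih (c+1) d p, show c + 1 + n = c + (n+1) from by omega]

theorem apps_lift (qs : List Pf) : ∀ (p : Pf) (c d : ℕ),
    (Pf.apps p qs).lift c d = Pf.apps (p.lift c d) (qs.map (Pf.lift c d)) := by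
  induction qs with
  | nil => intros; rfl
  | cons q qs ih =>
    intro p c d
    simp only [Pf.apps, List.map_cons]
    rw [ih]
    rfl

theorem Pf.FirstOrder.lift {p : Pf} (h : p.FirstOrder) (c d : ℕ) :
    (p.lift c d).FirstOrder := by
  induction h generalizing c with
  | const κ => exact .const κ
  | bvar a =>
    simp only [Pf.lift]
    split_ifs <;> exact .bvar _
  | app hp hq ihp ihq => exact .app (ihp c) (ihq c)

/-- Substituting a first-order term into a first-order term gives a first-order term. -/
theorem fo_subst {p q : Pf} (hp : p.FirstOrder) (hq : q.FirstOrder) (k : ℕ) :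
    (Pf.subst k q p).FirstOrder := by
  induction hp generalizing k with
  | const κ => exact .const κ
  | bvar a =>
    simp only [Pf.subst]
    split_ifs
    · exact .bvar _
    · exact hq.lift 0 k
    · exact .bvar _
  | app hp hq' ihp ihq => exact .app (ihp k) (ihq k)

theorem Pf.FirstOrder.apps {p : Pf} (h : p.FirstOrder) {qs : List Pf}
    (hqs : ∀ q ∈ qs, Pf.FirstOrder q) : (Pf.apps p qs).FirstOrder := by
  induction qs generalizing p with
  | nil => exact h
  | cons q qs ih =>
    exact ih (.app h (hqs q (by simp))) (fun q hq => hqs q (by simp [hq]))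

theorem bvars_fo (is : List ℕ) : ∀ q ∈ is.map Pf.bvar, Pf.FirstOrder q := by
  intro q hq
  simp only [List.mem_map] at hq
  obtain ⟨i, _, rfl⟩ := hq
  exact .bvar _

/-- Reducing a tower of lambdas applied to de Bruijn variables. -/
theorem red_apps_lams_bvars : ∀ (is : List ℕ) (j : ℕ) (p : Pf), p.FirstOrder →
    ∃ r', Relation.ReflTransGen Beta
      (Pf.apps (Pf.lams (is.length + j) p) (is.map Pf.bvar)) r' ∧
      (r'.FirstOrder ∨ ∃ r, r' = Pf.lams j r ∧ r.FirstOrder) := by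
  intro is
  induction is with
  | nil =>
    intro j p hp
    simp only [List.length_nil, Nat.zero_add, List.map_nil]
    exact ⟨Pf.lams j p, .refl, Or.inr ⟨p, rfl, hp⟩⟩
  | cons i is ih =>
    intro j p hp
    rw [show (i :: is).length + j = (is.length + j) + 1 from by simp; omega]
    set L := is.length + j with hL
    by_cases hi : i = 0
    · subst hi
      have hstep : Beta (Pf.app (Pf.lam (Pf.lams L p)) (Pf.bvar 0)) (Pf.lams L p) := by
        have hb := Beta.beta (Pf.lams L p) (Pf.bvar 0)
        have hsub : Pf.subst 0 (Pf.lams L p) (Pf.bvar 0) = Pf.lams L p := by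
          simp [Pf.subst, pfLift_zero]
        rwa [hsub] at hb
      obtain ⟨r', hr, hg⟩ := ih j p hp
      exact ⟨r', (betaStar_apps (is.map Pf.bvar)
        (Relation.ReflTransGen.single hstep)).trans hr, hg⟩
    · have hstep : Beta (Pf.app (Pf.lam (Pf.lams L p)) (Pf.bvar i)) (Pf.bvar (i - 1)) := by
        have hb := Beta.beta (Pf.lams L p) (Pf.bvar i)
        have hsub : Pf.subst 0 (Pf.lams L p) (Pf.bvar i) = Pf.bvar (i - 1) := by
          simp [Pf.subst, hi]
        rwa [hsub] at hb
      refine ⟨Pf.apps (Pf.bvar (i - 1)) (is.map Pf.bvar),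
        betaStar_apps _ (Relation.ReflTransGen.single hstep),
        Or.inl ((Pf.FirstOrder.bvar _).apps (bvars_fo is))⟩

/-- Lifting commutes with `cutTerm`. -/
theorem cutTerm_lift (n m : ℕ) (e₁ e₂ : Pf) (c d : ℕ) :
    (cutTerm n m e₁ e₂).lift c d = cutTerm n m (e₁.lift c d) (e₂.lift c d) := by
  unfold cutTerm
  rw [lams_lift]
  simp only [Pf.lift, apps_lift]
  have h2 : Pf.lift (c + (n + m)) d (Pf.lift 0 (n + m) e₂) =
      Pf.lift 0 (n + m) (Pf.lift c d e₂) := by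
    simpa using pfLift_lift e₂ 0 c (n + m) d (Nat.zero_le c)
  have h1 : Pf.lift (c + (n + m)) d (Pf.lift 0 (n + m) e₁) =
      Pf.lift 0 (n + m) (Pf.lift c d e₁) := by
    simpa using pfLift_lift e₁ 0 c (n + m) d (Nat.zero_le c)
  have hmap2 : List.map (Pf.lift (c + (n + m)) d)
      (List.map (fun j => Pf.bvar (m - 1 - j)) (List.range m)) =
      List.map (fun j => Pf.bvar (m - 1 - j)) (List.range m) := by
    rw [List.map_map]
    apply List.map_congr_left
    intro j hj
    simp only [List.mem_range] at hj
    simp only [Function.comp_apply, Pf.lift]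
    rw [if_pos (by omega)]
  have hmap1 : List.map (Pf.lift (c + (n + m)) d)
      (List.map (fun j => Pf.bvar (n + m - 1 - j)) (List.range n)) =
      List.map (fun j => Pf.bvar (n + m - 1 - j)) (List.range n) := by
    rw [List.map_map]
    apply List.map_congr_left
    intro j hj
    simp only [List.mem_range] at hj
    simp only [Function.comp_apply, Pf.lift]
    rw [if_pos (by omega)]
  rw [h1, h2, hmap1, hmap2]

/-- Apply a finite sequence of lifts. -/
def applyLifts (l : List (ℕ × ℕ)) (e : Pf) : Pf :=
  l.foldl (fun e cd => e.lift cd.1 cd.2) e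

theorem applyLifts_const (l : List (ℕ × ℕ)) (κ : ℕ) :
    applyLifts l (.const κ) = .const κ := by
  induction l with
  | nil => rfl
  | cons cd l ih =>
    show applyLifts l ((Pf.const κ).lift cd.1 cd.2) = _
    exact ih

theorem applyLifts_append (l₁ l₂ : List (ℕ × ℕ)) (e : Pf) :
    applyLifts (l₁ ++ l₂) e = applyLifts l₂ (applyLifts l₁ e) := by
  simp [applyLifts, List.foldl_append]

theorem applyLifts_cutTerm (l : List (ℕ × ℕ)) (n m : ℕ) (e₁ e₂ : Pf) :
    applyLifts l (cutTerm n m e₁ e₂) = cutTerm n m (applyLifts l e₁) (applyLifts l e₂) := by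
  induction l generalizing e₁ e₂ with
  | nil => rfl
  | cons cd l ih =>
    show applyLifts l ((cutTerm n m e₁ e₂).lift cd.1 cd.2) = _
    rw [cutTerm_lift]
    exact ih _ _

/-- Body length of a formula. -/
def blen : Formula → ℕ
  | .horn b _ => b.length
  | .all b _ => b.length

/-- A term is `k`-good if it is first order or `λa1...ak.n` with `n` first order. -/
def Good (k : ℕ) (n : Pf) : Prop :=
  n.FirstOrder ∨ ∃ m, n = Pf.lams k m ∧ m.FirstOrder

theorem derives_good {Φ : Prog} {e : Pf} {F : Formula} (h : Derives Φ e F) :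
    ∀ l : List (ℕ × ℕ), ∃ n,
      Relation.ReflTransGen Beta (applyLifts l e) n ∧ Good (blen F) n := by
  induction h with
  | ax h => intro l; rw [applyLifts_const]; exact ⟨_, .refl, Or.inl (.const _)⟩
  | gen h ih => exact ih
  | inst σ h ih => intro l; simpa [blen, Good, List.length_map] using ih l
  | @cut e₁ e₂ As Bs D C h1 h2 ih1 ih2 =>
    intro l
    simp only [blen, List.length_append] at *
    set n := As.length with hn
    set m := Bs.length with hm
    set K := n + m with hK
    rw [applyLifts_cutTerm]
    set E₁ := applyLifts l e₁ with hE1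
    set E₂ := applyLifts l e₂ with hE2
    obtain ⟨n₁, hr1, hg1⟩ := ih1 (l ++ [(0, K)])
    obtain ⟨n₂, hr2, hg2⟩ := ih2 (l ++ [(0, K)])
    rw [applyLifts_append] at hr1 hr2
    have hr1' : Relation.ReflTransGen Beta (E₁.lift 0 K) n₁ := hr1
    have hr2' : Relation.ReflTransGen Beta (E₂.lift 0 K) n₂ := hr2
    set is₁ : List ℕ := (List.range n).map (fun j => n + m - 1 - j) with his1
    set is₂ : List ℕ := (List.range m).map (fun j => m - 1 - j) with his2
    have hlen1 : is₁.length = n := by simp [his1]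
    have hlen2 : is₂.length = m := by simp [his2]
    have hCT : cutTerm n m E₁ E₂ =
        Pf.lams K (Pf.app (Pf.apps (E₂.lift 0 K) (is₂.map Pf.bvar))
          (Pf.apps (E₁.lift 0 K) (is₁.map Pf.bvar))) := by
      unfold cutTerm
      rw [his1, his2, List.map_map, List.map_map]
      rfl
    rw [hCT]
    have hN : ∃ N', Relation.ReflTransGen Beta
        (Pf.apps (E₁.lift 0 K) (is₁.map Pf.bvar)) N' ∧ N'.FirstOrder := by
      rcases hg1 with hfo | ⟨p₁, rfl, hp₁⟩
      · exact ⟨_, betaStar_apps _ hr1', hfo.apps (bvars_fo is₁)⟩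
      · obtain ⟨r', hr', hg'⟩ := red_apps_lams_bvars is₁ 0 p₁ hp₁
        rw [hlen1, Nat.add_zero] at hr'
        refine ⟨r', (betaStar_apps _ hr1').trans hr', ?_⟩
        rcases hg' with hfo | ⟨r, rfl, hfo⟩
        · exact hfo
        · exact hfo
    have hM : ∃ M', Relation.ReflTransGen Beta
        (Pf.apps (E₂.lift 0 K) (is₂.map Pf.bvar)) M' ∧
        (M'.FirstOrder ∨ ∃ r, M' = Pf.lam r ∧ r.FirstOrder) := by
      rcases hg2 with hfo | ⟨p₂, rfl, hp₂⟩
      · exact ⟨_, betaStar_apps _ hr2', Or.inl (hfo.apps (bvars_fo is₂))⟩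
      · obtain ⟨r', hr', hg'⟩ := red_apps_lams_bvars is₂ 1 p₂ hp₂
        rw [hlen2] at hr'
        exact ⟨r', (betaStar_apps _ hr2').trans hr', hg'⟩
    obtain ⟨N', hNred, hNfo⟩ := hN
    obtain ⟨M', hMred, hMfo⟩ := hM
    have hbody := betaStar_app hMred hNred
    rcases hMfo with hMfo | ⟨r, rfl, hrfo⟩
    · exact ⟨Pf.lams K (Pf.app M' N'), betaStar_lams K hbody,
        Or.inr ⟨_, rfl, .app hMfo hNfo⟩⟩
    · refine ⟨Pf.lams K (Pf.subst 0 r N'), ?_, Or.inr ⟨_, rfl, fo_subst hNfo hrfo 0⟩⟩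
      exact betaStar_lams K (hbody.trans (Relation.ReflTransGen.single (Beta.beta r N')))

/-- If `e : [∀x̄.] ⇒ B` is derivable from `Φ`, then `e` β-normalizes to
a first-order proof term. -/
theorem empty_body_first_order (Φ : Prog) (e : Pf) (head : Atom)
    (h : Derives Φ e (.horn [] head) ∨ Derives Φ e (.all [] head)) :
    ∃ n : Pf, Relation.ReflTransGen Beta e n ∧ n.FirstOrder := by
  have key : ∃ n, Relation.ReflTransGen Beta e n ∧ Good 0 n := by
    rcases h with h | h
    · simpa [blen, applyLifts] using derives_good h []
    · simpa [blen, applyLifts] using derives_good h []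
  obtain ⟨n, hr, hg⟩ := key
  refine ⟨n, hr, ?_⟩
  rcases hg with hfo | ⟨m, rfl, hfo⟩
  · exact hfo
  · exact hfo

end SRes
end
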